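/- Let $X$ be a path-connected convenient space. The equality $\mathrm{ATC}_r(X)=0$ holds for some $r>0$ if and only if it holds for every $r>0$, if and only if $X$ is contractible. -/

import Mathlib

open scoped unitInterval

noncomputable section

universe u v


/-- Presentations of probability measures with finite support: a tuple of points
together with a point of the standard simplex. This is the disjoint union
`⨆ₙ Xⁿ × Δ^{n-1}`. -/
def PreProb (X : Type u) [TopologicalSpace X] : Type u :=
  Σ n : ℕ, (Fin (n + 1) → X) × (stdSimplex ℝ (Fin (n + 1)))

instance (X : Type u) [TopologicalSpace X] : TopologicalSpace (PreProb X) :=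
  inferInstanceAs (TopologicalSpace (Σ n : ℕ, (Fin (n + 1) → X) × (stdSimplex ℝ (Fin (n + 1)))))

/-- The space of probability measures with finite support, encoded as finitely
supported real-valued functions that are nonnegative and sum to `1`.  Its topology
(defined below) is coinduced from the space of presentations, i.e. it is the quotient
topology of the paper. -/
def FinProb (X : Type u) [TopologicalSpace X] : Type u :=
  { w : X →₀ ℝ // (∀ x, 0 ≤ w x) ∧ w.sum (fun _ t => t) = 1 }

/-- The quotient map from presentations to finitely supported probability measures,
`(x₁,…,xₙ,t₁,…,tₙ) ↦ ∑ tᵢ δ_{xᵢ}`. -/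
def PreProb.toFinProb {X : Type u} [TopologicalSpace X] (p : PreProb X) : FinProb X := by
  classical
  refine ⟨∑ i, Finsupp.single (p.2.1 i) ((p.2.2 : Fin (p.1 + 1) → ℝ) i), ?_, ?_⟩
  · intro x
    rw [Finsupp.finset_sum_apply]
    refine Finset.sum_nonneg fun i _ => ?_
    rw [Finsupp.single_apply]
    split
    · exact p.2.2.2.1 i
    · exact le_refl 0
  · rw [← Finsupp.sum_finset_sum_index (fun _ => rfl) (fun _ _ _ => rfl)]
    simpa [Finsupp.sum_single_index] using p.2.2.2.2

/-- The quotient topology on the space of probability measures with finite support. -/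
instance FinProb.instTopologicalSpace (X : Type u) [TopologicalSpace X] :
    TopologicalSpace (FinProb X) :=
  TopologicalSpace.coinduced PreProb.toFinProb inferInstance

/-- The weight that a finitely supported probability measure assigns to a point. -/
def FinProb.weight {X : Type u} [TopologicalSpace X] (μ : FinProb X) (x : X) : ℝ := μ.1 x

/-- The support of a finitely supported probability measure, as a finset. -/
def FinProb.supp {X : Type u} [TopologicalSpace X] (μ : FinProb X) : Finset X := μ.1.support

/-- `𝒫ₙ(X)`: the subspace of measures supported on at most `n` points. -/
def FinProbLe (X : Type u) [TopologicalSpace X] (n : ℕ) : Set (FinProb X) :=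
  { μ | μ.supp.card ≤ n }

/-- Covariant functoriality: the pushforward `f₊ : 𝒫(X) → 𝒫(Y)`,
`∑ tᵢ δ_{xᵢ} ↦ ∑ tᵢ δ_{f xᵢ}`. -/
def FinProb.map {X : Type u} {Y : Type v} [TopologicalSpace X] [TopologicalSpace Y]
    (f : X → Y) (μ : FinProb X) : FinProb Y := by
  classical
  refine ⟨Finsupp.mapDomain f μ.1, ?_, ?_⟩
  · intro y
    rw [Finsupp.mapDomain, Finsupp.sum_apply]
    refine Finset.sum_nonneg fun x _ => ?_
    dsimp only
    rw [Finsupp.single_apply]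
    split
    · exact μ.2.1 x
    · exact le_refl 0
  · rw [Finsupp.sum_mapDomain_index (fun _ => rfl) (fun _ _ _ => rfl)]
    exact μ.2.2

/-- The Dirac measure `δ_x`, i.e. the unit `η` of the monad `𝒫`. -/
def FinProb.dirac {X : Type u} [TopologicalSpace X] (x : X) : FinProb X := by
  classical
  refine ⟨Finsupp.single x 1, ?_, ?_⟩
  · intro y
    rw [Finsupp.single_apply]
    split
    · exact zero_le_one
    · exact le_refl 0
  · rw [Finsupp.sum_single_index rfl]

/-- `𝒫(f)`: the space of `f`-relative probability measures of finite support, i.e. those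
measures on `X` whose support is mapped by `f` to a single point of `Y`. -/
def FinProbRel {X : Type u} {Y : Type v} [TopologicalSpace X] (f : X → Y) :
    Set (FinProb X) :=
  { μ | ∃ y : Y, f '' ↑μ.supp = {y} }

/-- The projection `p : 𝒫(f) → Y`, sending a relative measure to the unique point of
`f(supp μ)`. -/
def FinProbRel.proj {X : Type u} {Y : Type v} [TopologicalSpace X] (f : X → Y)
    (μ : FinProbRel f) : Y :=
  Exists.choose μ.2

/-- The projection `𝒫(f) → Y` admits a continuous section with image in `𝒫_{n+1}(f)`. -/
def HasAnalogSec {X : Type u} {Y : Type v} [TopologicalSpace X] [TopologicalSpace Y]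
    (f : X → Y) (n : ℕ) : Prop :=
  ∃ s : Y → FinProbRel f, Continuous s ∧ (∀ y, FinProbRel.proj f (s y) = y) ∧
    ∀ y, (s y : FinProb X).supp.card ≤ n + 1

/-- The analog sectional category of a map: the least `n` such that the projection
`𝒫(f) → Y` admits a continuous section with image in `𝒫_{n+1}(f)` (`⊤` if there is
no such `n`). -/
def asecat {X : Type u} {Y : Type v} [TopologicalSpace X] [TopologicalSpace Y]
    (f : X → Y) : ℕ∞ :=
  sInf { n : ℕ∞ | ∃ m : ℕ, (m : ℕ∞) = n ∧ HasAnalogSec f m }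

/-- Evaluation of paths at the `r` equally spaced times `i/(r-1)`, `0 ≤ i < r`:
the fibration `π_X^r : X^{[0,1]} → X^r`. -/
def pathEval (X : Type u) [TopologicalSpace X] (r : ℕ) : C(I, X) → (Fin r → X) :=
  fun γ i => γ (Set.projIcc (0 : ℝ) 1 zero_le_one ((i : ℝ) / ((r : ℝ) - 1)))

/-- The based path space `(X, x₀)^{([0,1],{0})}`. -/
def BasedPaths (X : Type u) [TopologicalSpace X] (x₀ : X) : Type u :=
  { γ : C(I, X) // γ 0 = x₀ }

instance (X : Type u) [TopologicalSpace X] (x₀ : X) : TopologicalSpace (BasedPaths X x₀) :=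
  inferInstanceAs (TopologicalSpace { γ : C(I, X) // γ 0 = x₀ })

/-- Evaluation at `1` on the based path space. -/
def basedPathEval (X : Type u) [TopologicalSpace X] (x₀ : X) : BasedPaths X x₀ → X :=
  fun γ => γ.1 1

/-- The analog (LS-)category of a space. -/
def acat (X : Type u) [TopologicalSpace X] (x₀ : X) : ℕ∞ :=
  asecat (basedPathEval X x₀)

/-- The `r`-th sequential analog topological complexity; `ATC₁ = acat`. -/
def ATC (X : Type u) [TopologicalSpace X] (x₀ : X) (r : ℕ) : ℕ∞ :=
  if r = 1 then acat X x₀ else asecat (pathEval X r)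

/-- Classical sectional category data: `f` admits continuous sections over each of
`n + 1` open sets covering `Y`. -/
def HasSecCover {X : Type u} {Y : Type v} [TopologicalSpace X] [TopologicalSpace Y]
    (f : X → Y) (n : ℕ) : Prop :=
  ∃ U : Fin (n + 1) → Set Y, (∀ i, IsOpen (U i)) ∧ (⋃ i, U i) = Set.univ ∧
    ∀ i, ∃ s : U i → X, Continuous s ∧ ∀ y : U i, f (s y) = (y : Y)

/-- The classical sectional category (Schwarz genus) of a map. -/
def secat {X : Type u} {Y : Type v} [TopologicalSpace X] [TopologicalSpace Y]
    (f : X → Y) : ℕ∞ :=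
  sInf { n : ℕ∞ | ∃ m : ℕ, (m : ℕ∞) = n ∧ HasSecCover f m }

/-- The classical Lusternik–Schnirelmann category (normalized: `cat(point) = 0`). -/
def catLS (X : Type u) [TopologicalSpace X] (x₀ : X) : ℕ∞ :=
  secat (basedPathEval X x₀)

/-- The classical `r`-th sequential topological complexity. -/
def seqTC (X : Type u) [TopologicalSpace X] (x₀ : X) (r : ℕ) : ℕ∞ :=
  if r = 1 then catLS X x₀ else secat (pathEval X r)

/-- The cohomological dimension of a group `G`: the least `n` (possibly `⊤`) such that the
group cohomology `Hᵏ(G; M)` vanishes for all `G`-modules `M` and all `k > n`. -/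
def groupCd (G : Type) [Group G] : ℕ∞ :=
  sInf { n : ℕ∞ | ∀ (M : Rep ℤ G) (k : ℕ), n < (k : ℕ∞) → Subsingleton (groupCohomology M k) }

/-- `B` (with basepoint `b`) is a classifying space for the discrete group `G`: a convenient
(compactly generated Hausdorff), path-connected, aspherical space with fundamental group `G`
and the homotopy type of a CW complex; this characterizes the geometric realization of the
nerve of `G` up to homotopy equivalence. -/
structure IsClassifyingSpace (G : Type) [Group G] (B : Type u) [TopologicalSpace B]
    (b : B) : Prop where
  t2 : T2Space B
  compactlyGenerated : CompactlyGeneratedSpace B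
  pathConnected : PathConnectedSpace B
  aspherical : ∀ n : ℕ, 2 ≤ n → Subsingleton (HomotopyGroup (Fin n) B b)
  pi1 : Nonempty (FundamentalGroup B b ≃* G)
  cwType : ∃ K : TopCat.{u}, Nonempty (TopCat.CWComplex K) ∧ Nonempty (ContinuousMap.HomotopyEquiv B K)

/-- A covering map of degree `k`: every fiber has exactly `k` points. -/
def IsCoveringOfDegree {E : Type u} {X : Type v} [TopologicalSpace E] [TopologicalSpace X]
    (p : E → X) (k : ℕ) : Prop :=
  IsCoveringMap p ∧ ∀ x, (p ⁻¹' {x}).encard = (k : ℕ∞)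

/-- Hurewicz fibration: the homotopy lifting property with respect to all spaces. -/
def IsHurewiczFibration {E : Type u} {B : Type v} [TopologicalSpace E] [TopologicalSpace B]
    (p : E → B) : Prop :=
  ∀ (Z : Type max u v) (_ : TopologicalSpace Z) (H : C(Z × I, B)) (h : C(Z, E)),
    (∀ z, p (h z) = H (z, 0)) →
      ∃ L : C(Z × I, E), (∀ z, L (z, 0) = h z) ∧ ∀ q, p (L q) = H q
lemma PreProb.toFinProb_coe {X : Type u} [TopologicalSpace X] (p : PreProb X) :
    (p.toFinProb : FinProb X).1
      = ∑ i, Finsupp.single (p.2.1 i) ((p.2.2 : Fin (p.1 + 1) → ℝ) i) := rfl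

open Finset in
/-- membership in the support of `toFinProb p` -/
lemma PreProb.mem_supp_toFinProb {X : Type u} [TopologicalSpace X] (p : PreProb X) (z : X) :
    z ∈ p.toFinProb.supp ↔ ∃ i, (p.2.2 : Fin (p.1 + 1) → ℝ) i ≠ 0 ∧ p.2.1 i = z := by
  classical
  rw [FinProb.supp, Finsupp.mem_support_iff, PreProb.toFinProb_coe]
  constructor
  · intro hz'
    rw [Finsupp.finset_sum_apply] at hz'
    obtain ⟨i, -, hi⟩ := Finset.exists_ne_zero_of_sum_ne_zero hz'
    rw [Finsupp.single_apply] at hi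
    by_cases h : p.2.1 i = z
    · exact ⟨i, by simpa [h] using hi, h⟩
    · simp [h] at hi
  · rintro ⟨i, hi, rfl⟩
    rw [Finsupp.finset_sum_apply]
    have hle : (p.2.2 : Fin (p.1+1) → ℝ) i ≤
        ∑ j, (Finsupp.single (p.2.1 j) ((p.2.2 : Fin (p.1+1) → ℝ) j)) (p.2.1 i) := by
      have := Finset.single_le_sum (f := fun j =>
          (Finsupp.single (p.2.1 j) ((p.2.2 : Fin (p.1+1) → ℝ) j)) (p.2.1 i))
        (s := Finset.univ) (fun j _ => by
          rw [Finsupp.single_apply]; split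
          · exact p.2.2.2.1 j
          · exact le_rfl) (Finset.mem_univ i)
      simpa [Finsupp.single_apply] using this
    have hpos : 0 < (p.2.2 : Fin (p.1+1) → ℝ) i := lt_of_le_of_ne (p.2.2.2.1 i) (Ne.symm hi)
    exact ne_of_gt (lt_of_lt_of_le hpos hle)

lemma FinProb.isOpen_hit {X : Type u} [TopologicalSpace X] {V : Set X} (hV : IsOpen V) :
    IsOpen { μ : FinProb X | ∃ z ∈ μ.supp, z ∈ V } := by
  have key : PreProb.toFinProb ⁻¹' { μ : FinProb X | ∃ z ∈ μ.supp, z ∈ V }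
      = { p : PreProb X | ∃ i, (p.2.2 : Fin (p.1+1) → ℝ) i ≠ 0 ∧ p.2.1 i ∈ V } := by
    ext p
    simp only [Set.mem_preimage, Set.mem_setOf_eq]
    constructor
    · rintro ⟨z, hz, hzV⟩
      obtain ⟨i, hi, rfl⟩ := (PreProb.mem_supp_toFinProb p z).1 hz
      exact ⟨i, hi, hzV⟩
    · rintro ⟨i, hi, hiV⟩
      exact ⟨p.2.1 i, (PreProb.mem_supp_toFinProb p _).2 ⟨i, hi, rfl⟩, hiV⟩
  refine isOpen_coinduced.mpr ?_
  rw [key]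
  apply isOpen_sigma_iff.mpr
  intro n
  have : (Sigma.mk n ⁻¹' { p : PreProb X | ∃ i, (p.2.2 : Fin (p.1+1) → ℝ) i ≠ 0 ∧ p.2.1 i ∈ V })
      = ⋃ i : Fin (n+1), ((fun q : (Fin (n+1) → X) × stdSimplex ℝ (Fin (n+1)) =>
          (q.2 : Fin (n+1) → ℝ) i) ⁻¹' {t | t ≠ 0}) ∩
        ((fun q : (Fin (n+1) → X) × stdSimplex ℝ (Fin (n+1)) => q.1 i) ⁻¹' V) := by
    ext q
    simp only [Set.mem_preimage, Set.mem_setOf_eq, Set.mem_iUnion, Set.mem_inter_iff]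
    exact exists_congr fun i => Iff.rfl
  erw [this]
  refine isOpen_iUnion fun i => IsOpen.inter ?_ ?_
  · exact isOpen_ne.preimage ((continuous_apply i).comp
      (continuous_subtype_val.comp continuous_snd))
  · exact hV.preimage ((continuous_apply i).comp continuous_fst)

lemma FinProb.supp_nonempty {X : Type u} [TopologicalSpace X] (μ : FinProb X) :
    μ.supp.Nonempty := by
  rw [Finset.nonempty_iff_ne_empty]
  intro h
  have : μ.1.sum (fun _ t => t) = 0 := by
    rw [Finsupp.sum, FinProb.supp] at *
    rw [h]; rfl
  rw [μ.2.2] at this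
  exact one_ne_zero this

lemma FinProb.continuous_dirac {X : Type u} [TopologicalSpace X] :
    Continuous (FinProb.dirac : X → FinProb X) := by
  classical
  have hv : (fun _ : Fin 1 => (1:ℝ)) ∈ stdSimplex ℝ (Fin 1) :=
    ⟨fun _ => zero_le_one, by simp⟩
  have heq : (FinProb.dirac : X → FinProb X) = fun x =>
      PreProb.toFinProb ⟨0, (fun _ => x, ⟨fun _ => 1, hv⟩)⟩ := by
    funext x
    apply Subtype.ext
    erw [PreProb.toFinProb_coe]
    simp [FinProb.dirac]
  rw [heq]
  have hs : Continuous (fun q : (Fin 1 → X) × stdSimplex ℝ (Fin 1) => (⟨0, q⟩ : PreProb X)) := by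
    have h : Continuous
        (Sigma.mk (β := fun n : ℕ => (Fin (n+1) → X) × stdSimplex ℝ (Fin (n+1))) 0) :=
      continuous_sigmaMk
    exact h
  have hT : Continuous (PreProb.toFinProb : PreProb X → FinProb X) := continuous_coinduced_rng
  exact hT.comp (hs.comp
    (Continuous.prodMk (continuous_pi fun _ => continuous_id) continuous_const))

lemma FinProb.supp_dirac {X : Type u} [TopologicalSpace X] (x : X) :
    (FinProb.dirac x).supp = {x} := by
  rw [FinProb.supp, FinProb.dirac]
  exact Finsupp.support_single_ne_zero x one_ne_zero

lemma FinProbRel.proj_eq {X : Type u} {Y : Type v} [TopologicalSpace X] (f : X → Y)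
    (μ : FinProbRel f) {z : X} (hz : (μ : FinProb X).supp = {z}) :
    FinProbRel.proj f μ = f z := by
  have h := μ.2.choose_spec
  rw [FinProbRel.proj]
  have hmem : f z ∈ f '' ↑(μ : FinProb X).supp := ⟨z, by rw [hz]; simp, rfl⟩
  rw [h] at hmem
  exact (Set.mem_singleton_iff.1 hmem).symm

/-- From an analog section with Dirac values, extract an honest continuous section. -/
lemma exists_section_of_hasAnalogSec_zero {X : Type u} {Y : Type v} [TopologicalSpace X]
    [TopologicalSpace Y] {f : X → Y} (h : HasAnalogSec f 0) :
    ∃ g : Y → X, Continuous g ∧ ∀ y, f (g y) = y := by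
  obtain ⟨s, hs, hproj, hcard⟩ := h
  have hone : ∀ y, ∃ z : X, ((s y : FinProb X)).supp = {z} := by
    intro y
    have h1 : ((s y : FinProb X)).supp.card = 1 :=
      le_antisymm (by simpa using hcard y)
        (Finset.Nonempty.card_pos (FinProb.supp_nonempty _))
    exact Finset.card_eq_one.1 h1
  choose g hg using hone
  refine ⟨g, ?_, ?_⟩
  · rw [continuous_def]
    intro V hV
    have : g ⁻¹' V = (fun y => (s y : FinProb X)) ⁻¹'
        { μ : FinProb X | ∃ z ∈ μ.supp, z ∈ V } := by
      ext y
      simp only [Set.mem_preimage, Set.mem_setOf_eq, hg y, Finset.mem_singleton]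
      constructor
      · intro hy; exact ⟨g y, rfl, hy⟩
      · rintro ⟨z, rfl, hz⟩; exact hz
    rw [this]
    exact (FinProb.isOpen_hit hV).preimage (continuous_subtype_val.comp hs)
  · intro y
    have := FinProbRel.proj_eq f (s y) (hg y)
    rw [hproj y] at this
    exact this.symm

/-- An honest continuous section gives an analog section by Dirac measures. -/
lemma hasAnalogSec_zero_of_section {X : Type u} {Y : Type v} [TopologicalSpace X]
    [TopologicalSpace Y] {f : X → Y} (g : Y → X) (hg : Continuous g)
    (hfg : ∀ y, f (g y) = y) : HasAnalogSec f 0 := by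
  have hmem : ∀ y, FinProb.dirac (g y) ∈ FinProbRel f := by
    intro y
    refine ⟨f (g y), ?_⟩
    rw [FinProb.supp_dirac]
    simp
  refine ⟨fun y => ⟨FinProb.dirac (g y), hmem y⟩, ?_, ?_, ?_⟩
  · exact Continuous.subtype_mk (FinProb.continuous_dirac.comp hg) _
  · intro y
    rw [FinProbRel.proj_eq f _ (by exact FinProb.supp_dirac (g y))]
    exact hfg y
  · intro y
    simp [FinProb.supp_dirac]

lemma asecat_eq_zero_iff {X : Type u} {Y : Type v} [TopologicalSpace X]
    [TopologicalSpace Y] (f : X → Y) :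
    asecat f = 0 ↔ HasAnalogSec f 0 := by
  constructor
  · intro h
    by_contra hn
    have : (1 : ℕ∞) ≤ asecat f := by
      apply le_sInf
      rintro n ⟨m, rfl, hm⟩
      have : m ≠ 0 := fun hm0 => hn (hm0 ▸ hm)
      exact_mod_cast Nat.one_le_iff_ne_zero.2 this
    rw [h] at this
    exact (by norm_num : ¬ (1:ℕ∞) ≤ 0) this
  · intro h
    refine le_antisymm ?_ zero_le
    exact sInf_le ⟨0, rfl, h⟩

/-- A contractible path-connected space admits a homotopy from the identity to
the constant map at any prescribed point. -/
lemma exists_contraction {X : Type u} [TopologicalSpace X] [PathConnectedSpace X]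
    (hX : ContractibleSpace X) (x : X) :
    Nonempty ((ContinuousMap.id X).Homotopy (ContinuousMap.const X x)) := by
  obtain ⟨y, hy⟩ := (contractible_iff_id_nullhomotopic X).1 hX
  obtain ⟨H⟩ := hy
  let p := PathConnectedSpace.somePath y x
  refine ⟨H.trans ⟨⟨fun q => p q.1, by continuity⟩, ?_, ?_⟩⟩
  · intro z; simp
  · intro z; simp

/-- From a contraction, a continuous section of the endpoint evaluation on based paths. -/
lemma section_basedPathEval {X : Type u} [TopologicalSpace X] (x : X)
    (H : (ContinuousMap.id X).Homotopy (ContinuousMap.const X x)) :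
    ∃ g : X → BasedPaths X x, Continuous g ∧ ∀ y, basedPathEval X x (g y) = y := by
  let F : C(X × I, X) := ⟨fun q => H (unitInterval.symm q.2, q.1), by continuity⟩
  have h0 : ∀ y : X, F.curry y 0 = x := by
    intro y
    show H (unitInterval.symm 0, y) = x
    rw [unitInterval.symm_zero, H.apply_one]; rfl
  refine ⟨fun y => ⟨F.curry y, h0 y⟩, ?_, ?_⟩
  · exact Continuous.subtype_mk F.curry.continuous _
  · intro y
    show F (y, 1) = y
    show H (unitInterval.symm 1, y) = y
    rw [unitInterval.symm_one, H.apply_zero]; rfl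

/-- Conversely, a continuous section of the endpoint evaluation gives a contraction. -/
lemma contractibleSpace_of_section_basedPathEval {X : Type u} [TopologicalSpace X] (x : X)
    (g : X → BasedPaths X x) (hg : Continuous g) (h : ∀ y, basedPathEval X x (g y) = y) :
    ContractibleSpace X := by
  rw [contractible_iff_id_nullhomotopic]
  have hc : Continuous fun q : I × X => (g q.2).1 q.1 := by
    have h1 : Continuous fun q : I × X => ((g q.2).1, q.1) :=
      ((continuous_subtype_val.comp hg).comp continuous_snd).prodMk continuous_fst
    exact ContinuousEval.continuous_eval.comp h1
  refine ⟨x, ⟨ContinuousMap.Homotopy.symm ⟨⟨fun q => (g q.2).1 q.1, hc⟩, ?_, ?_⟩⟩⟩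
  · intro z; exact (g z).2
  · intro z; exact h z

/-- From a contraction, a continuous section of `pathEval X r` for `r ≥ 2`:
a continuous choice of a path through any `r` prescribed points at prescribed times. -/
lemma section_pathEval {X : Type u} [TopologicalSpace X] (x : X)
    (H : (ContinuousMap.id X).Homotopy (ContinuousMap.const X x)) (r : ℕ) (hr : 2 ≤ r) :
    ∃ g : (Fin r → X) → C(I, X), Continuous g ∧ ∀ y, pathEval X r (g y) = y := by
  classical
  obtain ⟨c, rfl⟩ : ∃ c, r = c + 1 := ⟨r - 1, by omega⟩
  have hc1 : 1 ≤ c := by omega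
  have hc0 : (0:ℝ) < (c:ℝ) := by exact_mod_cast Nat.pos_of_ne_zero (by omega)
  let idx : ℤ → Fin (c+1) := fun k => ⟨min k.toNat c, by omega⟩
  let sOf : I → ℝ := fun t => (c:ℝ) * (t:ℝ)
  let f : (Fin (c+1) → X) × I → X := fun q =>
    H (Set.projIcc (0:ℝ) 1 zero_le_one (2 * |sOf q.2 - round (sOf q.2)|),
      q.1 (idx (round (sOf q.2))))
  let fk : Fin (c+1) → (Fin (c+1) → X) × I → X := fun k q =>
    H (Set.projIcc (0:ℝ) 1 zero_le_one (2 * |sOf q.2 - (k.val:ℝ)|), q.1 k)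
  let T : Fin (c+1) → Set ((Fin (c+1) → X) × I) := fun k => {q | |sOf q.2 - (k.val:ℝ)| ≤ 1/2}
  -- continuity of sOf q.2
  have hsOf : Continuous fun q : (Fin (c+1) → X) × I => sOf q.2 :=
    (continuous_const.mul (continuous_subtype_val.comp continuous_snd))
  -- `f` agrees with `fk k` on `T k`
  have hagree : ∀ k : Fin (c+1), ∀ q ∈ T k, f q = fk k q := by
    intro k q hq
    have hq' : |sOf q.2 - (k.val:ℝ)| ≤ 1/2 := hq
    have habs := abs_le.1 hq'
    rcases lt_or_eq_of_le habs.2 with hlt | heq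
    · -- round (sOf q.2) = k
      have hround : round (sOf q.2) = (k.val : ℤ) := by
        rw [round_eq, Int.floor_eq_iff]
        constructor
        · push_cast; linarith [habs.1]
        · push_cast; linarith
      have hidx : idx (k.val : ℤ) = k := by
        simp only [idx]
        apply Fin.ext
        simp only [Int.toNat_natCast]
        have : k.val ≤ c := by omega
        simp [this, min_eq_left]
      show f q = fk k q
      simp only [f, fk, hround, hidx]
      push_cast
      rfl
    · -- boundary case : sOf q.2 = k + 1/2, both sides equal x
      have hs : sOf q.2 = (k.val:ℝ) + 1/2 := by linarith [heq]
      have h1 : (2 * |sOf q.2 - (k.val:ℝ)|) = 1 := by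
        rw [hs, show ((k.val:ℝ) + 1/2 - (k.val:ℝ)) = 1/2 by ring,
          abs_of_nonneg (by norm_num : (0:ℝ) ≤ 1/2)]
        norm_num
      have hround : round (sOf q.2) = (k.val : ℤ) + 1 := by
        rw [hs, round_eq]
        rw [show (k.val:ℝ) + 1/2 + 1/2 = ((k.val : ℤ) + 1 : ℤ) by push_cast; ring]
        exact Int.floor_intCast _
      have h2 : (2 * |sOf q.2 - (round (sOf q.2) : ℝ)|) = 1 := by
        rw [hround, hs]
        push_cast
        rw [show (k.val:ℝ) + 1/2 - ((k.val:ℝ) + 1) = -(1/2) by ring]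
        rw [abs_neg, abs_of_nonneg] <;> norm_num
      have h3 : Set.projIcc (0:ℝ) 1 zero_le_one (2 * |sOf q.2 - (round (sOf q.2) : ℝ)|)
          = (1:I) := by
        rw [h2]; exact Subtype.ext (by simp [Set.projIcc])
      have h4 : Set.projIcc (0:ℝ) 1 zero_le_one (2 * |sOf q.2 - (k.val:ℝ)|) = (1:I) := by
        rw [h1]; exact Subtype.ext (by simp [Set.projIcc])
      show f q = fk k q
      simp only [f, fk, h3, h4, H.apply_one]
      rfl
  -- the strips `T k` cover everything
  have hcover : ⋃ k, T k = Set.univ := by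
    apply Set.eq_univ_of_forall
    intro q
    have ht := q.2.2
    have h0s : 0 ≤ sOf q.2 := mul_nonneg hc0.le ht.1
    have h1s : sOf q.2 ≤ (c:ℝ) := by
      calc (c:ℝ) * (q.2:ℝ) ≤ (c:ℝ) * 1 := by
            exact mul_le_mul_of_nonneg_left ht.2 hc0.le
        _ = (c:ℝ) := mul_one _
    have hr0 : 0 ≤ round (sOf q.2) := by
      rw [round_eq]
      exact Int.floor_nonneg.2 (by linarith)
    have hr1 : round (sOf q.2) ≤ (c:ℤ) := by
      rw [round_eq]
      have : sOf q.2 + 1/2 < ((c:ℤ):ℝ) + 1 := by push_cast; linarith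
      have := Int.floor_lt.2 (by push_cast; linarith : sOf q.2 + 1/2 < (((c:ℤ) + 1 : ℤ) : ℝ))
      omega
    refine Set.mem_iUnion.2 ⟨idx (round (sOf q.2)), ?_⟩
    have hval : ((idx (round (sOf q.2))).val : ℝ) = (round (sOf q.2) : ℝ) := by
      simp only [idx]
      have h1 : (round (sOf q.2)).toNat ≤ c := by omega
      rw [min_eq_left h1]
      exact_mod_cast congrArg (fun z : ℤ => (z : ℝ)) (Int.toNat_of_nonneg hr0)
    show |sOf q.2 - ((idx (round (sOf q.2))).val : ℝ)| ≤ 1/2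
    rw [hval]
    exact abs_sub_round _
  have hclosed : ∀ k, IsClosed (T k) :=
    fun k => isClosed_le (((hsOf.sub continuous_const).abs)) continuous_const
  have hcont : ∀ k, ContinuousOn f (T k) := by
    intro k
    have : Continuous (fk k) := by
      apply H.continuous.comp
      apply Continuous.prodMk
      · exact continuous_projIcc.comp
          ((continuous_const.mul ((hsOf.sub continuous_const).abs)))
      · exact (continuous_apply k).comp continuous_fst
    exact (this.continuousOn).congr (hagree k)
  have hf : Continuous f :=
    (locallyFinite_of_finite T).continuous hcover hclosed hcont
  let F : C((Fin (c+1) → X) × I, X) := ⟨f, hf⟩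
  refine ⟨fun y => F.curry y, F.curry.continuous, ?_⟩
  intro y
  funext i
  have hic : (i.val : ℝ) ≤ (c:ℝ) := by exact_mod_cast (by omega : i.val ≤ c)
  have hr1 : ((c+1:ℕ):ℝ) - 1 = (c:ℝ) := by push_cast; ring
  have hmem : (i.val:ℝ) / (((c+1:ℕ):ℝ) - 1) ∈ Set.Icc (0:ℝ) 1 := by
    rw [hr1]
    constructor
    · positivity
    · rw [div_le_one hc0]; linarith
  show f (y, Set.projIcc (0:ℝ) 1 zero_le_one ((i.val:ℝ) / (((c+1:ℕ):ℝ) - 1))) = y i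
  have hs : sOf (Set.projIcc (0:ℝ) 1 zero_le_one ((i.val:ℝ) / (((c+1:ℕ):ℝ) - 1))) = (i.val:ℝ) := by
    show (c:ℝ) * ((Set.projIcc (0:ℝ) 1 zero_le_one ((i.val:ℝ) / (((c+1:ℕ):ℝ) - 1)) : I) : ℝ)
        = (i.val:ℝ)
    rw [Set.projIcc_of_mem zero_le_one hmem]
    show (c:ℝ) * ((i.val:ℝ) / (((c+1:ℕ):ℝ) - 1)) = (i.val:ℝ)
    rw [hr1]
    field_simp
  have hround : round ((i.val:ℝ)) = (i.val : ℤ) := round_natCast i.val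
  have hidx : idx (i.val : ℤ) = i := by
    simp only [idx]
    apply Fin.ext
    simp only [Int.toNat_natCast]
    exact min_eq_left (by omega)
  have h0 : Set.projIcc (0:ℝ) 1 zero_le_one (2 * |(i.val:ℝ) - ((i.val:ℤ):ℝ)|) = (0:I) := by
    rw [show (2 * |(i.val:ℝ) - ((i.val:ℤ):ℝ)| : ℝ) = 0 by push_cast; simp]
    rw [Set.projIcc_left]
    exact Subtype.ext rfl
  simp only [f, hs, hround, hidx, h0]
  rw [H.apply_zero]
  rfl

/-- A continuous section of `pathEval X r` (`r ≥ 2`) yields a contraction. -/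
lemma contractibleSpace_of_section_pathEval {X : Type u} [TopologicalSpace X] (x : X)
    (r : ℕ) (hr : 2 ≤ r) (g : (Fin r → X) → C(I, X)) (hg : Continuous g)
    (h : ∀ y, pathEval X r (g y) = y) : ContractibleSpace X := by
  classical
  obtain ⟨c, rfl⟩ : ∃ c, r = c + 1 := ⟨r - 1, by omega⟩
  have hc1 : 1 ≤ c := by omega
  have hc0 : (0:ℝ) < (c:ℝ) := by exact_mod_cast Nat.pos_of_ne_zero (by omega)
  let tup : X → (Fin (c+1) → X) := fun z i => if i.val = 0 then z else x
  have htup : Continuous tup := by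
    apply continuous_pi
    intro i
    by_cases hi : i.val = 0
    · simp only [tup, hi, if_true]; exact continuous_id
    · simp only [tup, hi, if_false]; exact continuous_const
  have hcK : Continuous fun q : I × X => g (tup q.2) q.1 := by
    have h1 : Continuous fun q : I × X => (g (tup q.2), q.1) :=
      ((hg.comp htup).comp continuous_snd).prodMk continuous_fst
    exact ContinuousEval.continuous_eval.comp h1
  have hr1 : ((c+1:ℕ):ℝ) - 1 = (c:ℝ) := by push_cast; ring
  rw [contractible_iff_id_nullhomotopic]
  refine ⟨x, ⟨⟨⟨fun q => g (tup q.2) q.1, hcK⟩, ?_, ?_⟩⟩⟩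
  · -- time 0 : value z
    intro z
    have h0 : (0:I) = Set.projIcc (0:ℝ) 1 zero_le_one
        (((0 : Fin (c+1)).val : ℝ) / (((c+1:ℕ):ℝ) - 1)) := by
      rw [show (((0 : Fin (c+1)).val : ℝ) / (((c+1:ℕ):ℝ) - 1)) = 0 by simp]
      rw [Set.projIcc_left]
      exact Subtype.ext rfl
    show g (tup z) 0 = z
    rw [h0]
    have := congrFun (h (tup z)) 0
    rw [pathEval] at this
    rw [this]
    simp [tup]
  · -- time 1 : value x
    intro z
    have hlast : ((⟨c, by omega⟩ : Fin (c+1)).val : ℝ) / (((c+1:ℕ):ℝ) - 1) = 1 := by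
      rw [hr1]
      show (c:ℝ) / (c:ℝ) = 1
      field_simp
    have h1 : (1:I) = Set.projIcc (0:ℝ) 1 zero_le_one
        (((⟨c, by omega⟩ : Fin (c+1)).val : ℝ) / (((c+1:ℕ):ℝ) - 1)) := by
      rw [hlast, Set.projIcc_right]
      exact Subtype.ext rfl
    show g (tup z) 1 = x
    rw [h1]
    have := congrFun (h (tup z)) ⟨c, by omega⟩
    rw [pathEval] at this
    rw [this]
    simp only [tup]
    rw [if_neg (by omega)]

/-- For a path-connected space `X`, the equality `ATCᵣ(X) = 0` holds for some `r > 0` if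
and only if it holds for every `r > 0`, if and only if `X` is contractible. -/
theorem ATC_eq_zero_iff_contractible {X : Type u} [TopologicalSpace X] [T2Space X]
    [CompactlyGeneratedSpace X] [PathConnectedSpace X] (x : X) :
    ((∃ r : ℕ, 0 < r ∧ ATC X x r = 0) ↔ ContractibleSpace X) ∧
      ((∀ r : ℕ, 0 < r → ATC X x r = 0) ↔ ContractibleSpace X) := by
  have hfwd : ContractibleSpace X → ∀ r : ℕ, 0 < r → ATC X x r = 0 := by
    intro hX r hr
    obtain ⟨H⟩ := exists_contraction hX x
    by_cases h1 : r = 1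
    · subst h1
      rw [ATC, if_pos rfl, acat]
      obtain ⟨g, hg, hsec⟩ := section_basedPathEval x H
      exact (asecat_eq_zero_iff _).2 (hasAnalogSec_zero_of_section g hg hsec)
    · rw [ATC, if_neg h1]
      obtain ⟨g, hg, hsec⟩ := section_pathEval x H r (by omega)
      exact (asecat_eq_zero_iff _).2 (hasAnalogSec_zero_of_section g hg hsec)
  have hbwd : ∀ r : ℕ, 0 < r → ATC X x r = 0 → ContractibleSpace X := by
    intro r hr h
    by_cases h1 : r = 1
    · subst h1
      rw [ATC, if_pos rfl, acat] at h
      obtain ⟨g, hg, hsec⟩ := exists_section_of_hasAnalogSec_zero ((asecat_eq_zero_iff _).1 h)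
      exact contractibleSpace_of_section_basedPathEval x g hg hsec
    · rw [ATC, if_neg h1] at h
      obtain ⟨g, hg, hsec⟩ := exists_section_of_hasAnalogSec_zero ((asecat_eq_zero_iff _).1 h)
      exact contractibleSpace_of_section_pathEval x r (by omega) g hg hsec
  constructor
  · exact ⟨fun ⟨r, hr, h⟩ => hbwd r hr h, fun hX => ⟨1, one_pos, hfwd hX 1 one_pos⟩⟩
  · exact ⟨fun h => hbwd 1 one_pos (h 1 one_pos), hfwd⟩

end
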